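/- Let K ⊂ ℝ^d be a nonempty closed convex set, let Φ : ℝ^d → ℝ be differentiable and (1/η)-strongly convex, and let ε₁, ε₂ : ℝ^d → ℝ be differentiable. If y₁ = argmin_{y∈K} { Φ(y) + ε₁(y) } and y₂ = argmin_{y∈K} { Φ(y) + ε₂(y) }, then ‖y₁ − y₂‖ ≤ η ‖∇ε₂(y₂) − ∇ε₁(y₁)‖. -/

import Mathlib

open scoped RealInnerProductSpace

/-- minimizers of two perturbations of a strongly convex function over a
closed convex set are close, quantitatively in terms of the gradients of the perturbations. -/
theorem ogd_omd_minimizer_distance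
    {E : Type*} [NormedAddCommGroup E] [InnerProductSpace ℝ E] [CompleteSpace E]
    (K : Set E) (hKne : K.Nonempty) (hKcl : IsClosed K) (hKcv : Convex ℝ K)
    (η : ℝ) (hη : 0 < η)
    (Φ ε₁ ε₂ : E → ℝ)
    (hΦ : Differentiable ℝ Φ) (hε₁ : Differentiable ℝ ε₁) (hε₂ : Differentiable ℝ ε₂)
    (hsc : ∀ u v : E, (1 / η) * ‖u - v‖ ^ 2 ≤ ⟪gradient Φ u - gradient Φ v, u - v⟫)
    (y₁ y₂ : E) (hy₁K : y₁ ∈ K) (hy₂K : y₂ ∈ K)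
    (hy₁ : IsMinOn (fun y => Φ y + ε₁ y) K y₁)
    (hy₂ : IsMinOn (fun y => Φ y + ε₂ y) K y₂)
    (hfoc₁ : ∀ w ∈ K, 0 ≤ ⟪gradient Φ y₁ + gradient ε₁ y₁, w - y₁⟫)
    (hfoc₂ : ∀ w ∈ K, 0 ≤ ⟪gradient Φ y₂ + gradient ε₂ y₂, w - y₂⟫) :
    ‖y₁ - y₂‖ ≤ η * ‖gradient ε₂ y₂ - gradient ε₁ y₁‖ := by
  rcases eq_or_ne y₁ y₂ with h | h
  · simp [h, mul_nonneg hη.le (norm_nonneg _)]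
  have h1 := hfoc₁ y₂ hy₂K
  have h2 := hfoc₂ y₁ hy₁K
  have hsum : ⟪gradient Φ y₁ - gradient Φ y₂, y₁ - y₂⟫ ≤
      ⟪gradient ε₂ y₂ - gradient ε₁ y₁, y₁ - y₂⟫ := by
    have e1 : ⟪gradient Φ y₁ + gradient ε₁ y₁, y₂ - y₁⟫ =
        -⟪gradient Φ y₁, y₁ - y₂⟫ - ⟪gradient ε₁ y₁, y₁ - y₂⟫ := by
      rw [inner_add_left]
      rw [show (y₂ - y₁ : E) = -(y₁ - y₂) by abel, inner_neg_right, inner_neg_right]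
      ring
    have e2 : ⟪gradient Φ y₂ + gradient ε₂ y₂, y₁ - y₂⟫ =
        ⟪gradient Φ y₂, y₁ - y₂⟫ + ⟪gradient ε₂ y₂, y₁ - y₂⟫ := inner_add_left _ _ _
    rw [e1] at h1; rw [e2] at h2
    rw [inner_sub_left, inner_sub_left]
    linarith
  have hcs : ⟪gradient ε₂ y₂ - gradient ε₁ y₁, y₁ - y₂⟫ ≤
      ‖gradient ε₂ y₂ - gradient ε₁ y₁‖ * ‖y₁ - y₂‖ := real_inner_le_norm _ _
  have hkey : (1 / η) * ‖y₁ - y₂‖ ^ 2 ≤ ‖gradient ε₂ y₂ - gradient ε₁ y₁‖ * ‖y₁ - y₂‖ :=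
    le_trans (hsc y₁ y₂) (le_trans hsum hcs)
  have hpos : 0 < ‖y₁ - y₂‖ := by
    rw [norm_pos_iff]; exact sub_ne_zero_of_ne h
  rw [div_mul_eq_mul_div, div_le_iff₀ hη] at hkey
  have := (mul_le_mul_iff_of_pos_right hpos).mp (by nlinarith [hkey] : ‖y₁ - y₂‖ * ‖y₁ - y₂‖ ≤ (η * ‖gradient ε₂ y₂ - gradient ε₁ y₁‖) * ‖y₁ - y₂‖)
  exact this
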